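/- Let ℓ ≥ r ≥ 3 be integers, set η = 1/(10⁵·ℓ³·(3r−4)³), and let ε ≥ 0 be real. Let G be a K_{ℓ+1}-free graph on n vertices with e(G) ≥ t_2(n,ℓ) − ε·n². Suppose v₁,…,v_t are distinct vertices of G such that for each i ∈ {1,…,t} the degree of v_i in the induced subgraph G − {v₁,…,v_{i−1}} is less than ((ℓ−1)/ℓ − η)·(n−i+1), and suppose the graph G′ = G − {v₁,…,v_t} is ℓ-partite with vertex classes V₁,…,V_ℓ. Then the number of pairs {x,y} with x ∈ V_i, y ∈ V_j for some i ≠ j and x not adjacent to y in G′ is at most 10⁶·ℓ³·(3r−4)³·ε·n². -/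

import Mathlib

open Finset

section helperLemmas

section helpers
variable {V : Type*} [Fintype V] [LinearOrder V]

lemma card_ltp (G : SimpleGraph V) [DecidableRel G.Adj] :
    #(univ.filter fun p : V × V => p.1 < p.2 ∧ G.Adj p.1 p.2) = #G.edgeFinset := by
  have h2 : 2 * #G.edgeFinset = #(univ.filter fun p : V × V => G.Adj p.1 p.2) :=
    G.two_mul_card_edgeFinset
  have hs : #((univ.filter fun p : V × V => G.Adj p.1 p.2).filter fun p : V × V => p.1 < p.2)
      + #((univ.filter fun p : V × V => G.Adj p.1 p.2).filter fun p : V × V => ¬ p.1 < p.2)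
      = #(univ.filter fun p : V × V => G.Adj p.1 p.2) :=
    Finset.card_filter_add_card_filter_not _
  have e1 : (univ.filter fun p : V × V => G.Adj p.1 p.2).filter (fun p : V × V => p.1 < p.2)
      = univ.filter fun p : V × V => p.1 < p.2 ∧ G.Adj p.1 p.2 := by
    ext p; simp [and_comm]
  have e2 : (univ.filter fun p : V × V => G.Adj p.1 p.2).filter (fun p : V × V => ¬ p.1 < p.2)
      = univ.filter fun p : V × V => p.2 < p.1 ∧ G.Adj p.1 p.2 := by
    ext p
    simp only [mem_filter, mem_univ, true_and, not_lt]
    constructor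
    · rintro ⟨ha, hle⟩; exact ⟨lt_of_le_of_ne hle (G.ne_of_adj ha).symm, ha⟩
    · rintro ⟨hlt, ha⟩; exact ⟨ha, hlt.le⟩
  have e3 : #(univ.filter fun p : V × V => p.2 < p.1 ∧ G.Adj p.1 p.2)
      = #(univ.filter fun p : V × V => p.1 < p.2 ∧ G.Adj p.1 p.2) := by
    apply Finset.card_bij (fun p _ => (p.2, p.1))
    · intro p hp; simp only [mem_filter, mem_univ, true_and] at hp ⊢
      exact ⟨hp.1, hp.2.symm⟩
    · intro p hp q hq h
      exact Prod.ext (congrArg Prod.snd h) (congrArg Prod.fst h)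
    · intro p hp
      refine ⟨(p.2, p.1), ?_, rfl⟩
      simp only [mem_filter, mem_univ, true_and] at hp ⊢
      exact ⟨hp.1, hp.2.symm⟩
  rw [e1, e2, e3] at hs
  omega

lemma turan_bound (K : SimpleGraph V) [DecidableRel K.Adj] {ℓ : ℕ} (hℓ : 0 < ℓ)
    (h : K.CliqueFree (ℓ + 1)) :
    #(K.edgeFinset) ≤ #(SimpleGraph.turanGraph (Fintype.card V) ℓ).edgeFinset := by
  classical
  obtain ⟨J, _, j⟩ := SimpleGraph.exists_isTuranMaximal (V := V) hℓ
  obtain ⟨g⟩ := j.nonempty_iso_turanGraph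
  exact (j.2 h).trans g.card_edgeFinset_eq.le

end helpers

lemma count_res (k ℓ : ℕ) (hℓ : 0 < ℓ) :
    #((Finset.range k).filter fun x => x % ℓ = k % ℓ) = k / ℓ := by
  rw [← Finset.card_range (k / ℓ)]
  apply Finset.card_bij' (fun x _ => x / ℓ) (fun q _ => k % ℓ + q * ℓ)
  · intro x hx
    simp only [mem_filter, mem_range] at hx ⊢
    have hle : x / ℓ ≤ k / ℓ := Nat.div_le_div_right hx.1.le
    rcases lt_or_eq_of_le hle with h | h
    · exact h
    · exfalso
      have hx2 : x = ℓ * (x / ℓ) + x % ℓ := (Nat.div_add_mod x ℓ).symm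
      rw [h] at hx2
      have hk2 : k = ℓ * (k / ℓ) + k % ℓ := (Nat.div_add_mod k ℓ).symm
      omega
  · intro q hq
    simp only [mem_filter, mem_range] at hq ⊢
    have hk2 : k = ℓ * (k / ℓ) + k % ℓ := (Nat.div_add_mod k ℓ).symm
    constructor
    · nlinarith
    · rw [Nat.add_mul_mod_self_right]
      exact Nat.mod_eq_of_lt (Nat.mod_lt _ hℓ)
  · intro x hx
    simp only [mem_filter, mem_range] at hx
    rw [← hx.2, Nat.mul_comm, Nat.mod_add_div]
  · intro q hq
    rw [Nat.add_mul_div_right _ _ hℓ, Nat.div_eq_of_lt (Nat.mod_lt _ hℓ)]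
    omega

lemma TG_succ (k ℓ : ℕ) (hℓ : 0 < ℓ) :
    #(SimpleGraph.turanGraph (k+1) ℓ).edgeFinset
      = #(SimpleGraph.turanGraph k ℓ).edgeFinset + (k - k / ℓ) := by
  rw [← card_ltp, ← card_ltp]
  have hsplit :
      #((univ.filter fun p : Fin (k+1) × Fin (k+1) =>
          p.1 < p.2 ∧ (SimpleGraph.turanGraph (k+1) ℓ).Adj p.1 p.2).filter
        (fun p => (p.2 : ℕ) = k))
      + #((univ.filter fun p : Fin (k+1) × Fin (k+1) =>
          p.1 < p.2 ∧ (SimpleGraph.turanGraph (k+1) ℓ).Adj p.1 p.2).filter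
        (fun p => ¬ (p.2 : ℕ) = k))
      = #(univ.filter fun p : Fin (k+1) × Fin (k+1) =>
          p.1 < p.2 ∧ (SimpleGraph.turanGraph (k+1) ℓ).Adj p.1 p.2) :=
    Finset.card_filter_add_card_filter_not _
  have hB : #(univ.filter fun p : Fin k × Fin k =>
        p.1 < p.2 ∧ (SimpleGraph.turanGraph k ℓ).Adj p.1 p.2)
      = #((univ.filter fun p : Fin (k+1) × Fin (k+1) =>
          p.1 < p.2 ∧ (SimpleGraph.turanGraph (k+1) ℓ).Adj p.1 p.2).filter
        (fun p => ¬ (p.2 : ℕ) = k)) := by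
    apply Finset.card_bij (fun p _ => (p.1.castSucc, p.2.castSucc))
    · intro p hp
      simp only [mem_filter, mem_univ, true_and, SimpleGraph.turanGraph_adj] at hp ⊢
      refine ⟨⟨by simpa using hp.1, by simpa using hp.2⟩, ?_⟩
      simp only [Fin.coe_castSucc]
      exact Nat.ne_of_lt p.2.isLt
    · intro p hp q hq h
      have h1 := congrArg Prod.fst h
      have h2 := congrArg Prod.snd h
      simp only [Fin.castSucc_inj] at h1 h2
      exact Prod.ext h1 h2
    · intro b hb
      simp only [mem_filter, mem_univ, true_and, SimpleGraph.turanGraph_adj] at hb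
      obtain ⟨⟨hlt, hadj⟩, hne⟩ := hb
      have hb2 : (b.2 : ℕ) < k := lt_of_le_of_ne (Nat.lt_succ_iff.1 b.2.isLt) hne
      have hb1 : (b.1 : ℕ) < k := lt_trans hlt hb2
      refine ⟨(⟨b.1, hb1⟩, ⟨b.2, hb2⟩), ?_, ?_⟩
      · simp only [mem_filter, mem_univ, true_and, SimpleGraph.turanGraph_adj]
        exact ⟨hlt, hadj⟩
      · ext <;> simp
  have hA : #((univ.filter fun p : Fin (k+1) × Fin (k+1) =>
          p.1 < p.2 ∧ (SimpleGraph.turanGraph (k+1) ℓ).Adj p.1 p.2).filter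
        (fun p => (p.2 : ℕ) = k))
      = #((Finset.range k).filter fun x => ¬ x % ℓ = k % ℓ) := by
    symm
    apply Finset.card_bij (fun x _ =>
      ((⟨x % (k+1), Nat.mod_lt x (Nat.succ_pos k)⟩ : Fin (k+1)),
       (⟨k, Nat.lt_succ_self k⟩ : Fin (k+1))))
    · intro x hx
      simp only [mem_filter, mem_range] at hx
      have hxx : x % (k+1) = x := Nat.mod_eq_of_lt (by omega)
      simp only [mem_filter, mem_univ, true_and, SimpleGraph.turanGraph_adj]
      refine ⟨⟨by simp only [Fin.lt_def]; omega, by simpa [hxx] using hx.2⟩, trivial⟩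
    · intro x hx y hy h
      simp only [mem_filter, mem_range] at hx hy
      have := congrArg (fun p : Fin (k+1) × Fin (k+1) => (p.1 : ℕ)) h
      simp only at this
      rw [Nat.mod_eq_of_lt (by omega : x < k+1), Nat.mod_eq_of_lt (by omega : y < k+1)] at this
      exact this
    · intro b hb
      simp only [mem_filter, mem_univ, true_and, SimpleGraph.turanGraph_adj] at hb
      obtain ⟨⟨hlt, hadj⟩, h2⟩ := hb
      rw [h2] at hadj
      have hb1 : (b.1 : ℕ) < k := by have := Fin.lt_def.1 hlt; omega
      refine ⟨(b.1 : ℕ), ?_, ?_⟩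
      · simp only [mem_filter, mem_range]
        exact ⟨hb1, hadj⟩
      · apply Prod.ext <;> apply Fin.ext <;>
          simp [Nat.mod_eq_of_lt (by omega : (b.1:ℕ) < k+1), h2]
  have hcnt : #((Finset.range k).filter fun x => ¬ x % ℓ = k % ℓ) = k - k / ℓ := by
    have h1 : #((Finset.range k).filter fun x => x % ℓ = k % ℓ)
        + #((Finset.range k).filter fun x => ¬ x % ℓ = k % ℓ) = k := by
      rw [Finset.card_filter_add_card_filter_not, Finset.card_range]
    rw [count_res k ℓ hℓ] at h1
    omega
  omega

lemma TG_sum (ℓ : ℕ) (hℓ : 0 < ℓ) (a b : ℕ) (hab : a ≤ b) :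
    #(SimpleGraph.turanGraph b ℓ).edgeFinset
      = #(SimpleGraph.turanGraph a ℓ).edgeFinset + ∑ j ∈ Finset.Ico a b, (j - j / ℓ) := by
  induction b, hab using Nat.le_induction with
  | base => simp
  | succ b hab ih =>
      rw [TG_succ b ℓ hℓ, ih, Finset.sum_Ico_succ_top hab]
      omega

end helperLemmas

/-- `turanEdges r n ℓ` is the number of edges of `T_r(n,ℓ)`, the complete `ℓ`-partite
`r`-graph on `n` vertices with balanced parts (vertex `x` lies in part `x % ℓ`):
its edges are the `r`-sets meeting each part in at most one vertex. -/
def turanEdges (r n ℓ : ℕ) : ℕ :=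
  ((Finset.univ : Finset (Finset (Fin n))).filter
    (fun e => e.card = r ∧ ∀ x ∈ e, ∀ y ∈ e, x.val % ℓ = y.val % ℓ → x = y)).card

lemma turanEdges_eq (n ℓ : ℕ) (hℓ : 0 < ℓ) :
    turanEdges 2 n ℓ = #(SimpleGraph.turanGraph n ℓ).edgeFinset := by
  rw [← card_ltp, turanEdges]
  symm
  apply Finset.card_bij (fun p _ => ({p.1, p.2} : Finset (Fin n)))
  · intro p hp
    simp only [mem_filter, mem_univ, true_and, SimpleGraph.turanGraph_adj] at hp ⊢
    obtain ⟨hlt, hadj⟩ := hp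
    refine ⟨Finset.card_pair (ne_of_lt hlt), ?_⟩
    intro x hx y hy hxy
    simp only [Finset.mem_insert, Finset.mem_singleton] at hx hy
    rcases hx with rfl | rfl <;> rcases hy with rfl | rfl
    · rfl
    · exact absurd hxy hadj
    · exact absurd hxy.symm hadj
    · rfl
  · intro p hp q hq h
    simp only [mem_filter, mem_univ, true_and] at hp hq
    have h1 : p.1 ∈ ({q.1, q.2} : Finset (Fin n)) := by rw [← h]; simp
    have h2 : p.2 ∈ ({q.1, q.2} : Finset (Fin n)) := by rw [← h]; simp
    simp only [Finset.mem_insert, Finset.mem_singleton] at h1 h2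
    have v1 : (p.1 : ℕ) = q.1 ∨ (p.1 : ℕ) = q.2 := by
      rcases h1 with h' | h' <;> [left; right] <;> rw [h']
    have v2 : (p.2 : ℕ) = q.1 ∨ (p.2 : ℕ) = q.2 := by
      rcases h2 with h' | h' <;> [left; right] <;> rw [h']
    have w1 : (p.1 : ℕ) < p.2 := Fin.lt_def.1 hp.1
    have w2 : (q.1 : ℕ) < q.2 := Fin.lt_def.1 hq.1
    have hv : (p.1 : ℕ) = q.1 ∧ (p.2 : ℕ) = q.2 := by omega
    exact Prod.ext (Fin.ext hv.1) (Fin.ext hv.2)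
  · intro e he
    simp only [mem_filter, mem_univ, true_and] at he
    obtain ⟨hcard, hprop⟩ := he
    obtain ⟨a, b, hab, rfl⟩ := Finset.card_eq_two.1 hcard
    rcases lt_or_gt_of_ne hab with hlt | hlt
    · refine ⟨(a, b), ?_, rfl⟩
      simp only [mem_filter, mem_univ, true_and, SimpleGraph.turanGraph_adj]
      refine ⟨hlt, fun hmod => hab (hprop a (by simp) b (by simp) hmod)⟩
    · refine ⟨(b, a), ?_, ?_⟩
      · simp only [mem_filter, mem_univ, true_and, SimpleGraph.turanGraph_adj]
        refine ⟨hlt, fun hmod => hab.symm (hprop b (by simp) a (by simp) hmod)⟩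
      · exact Finset.pair_comm b a

/-- Claim 3.6: the remaining `ℓ`-partite graph misses few cross pairs. -/
theorem few_missing_cross_pairs
    (ℓ r : ℕ) (hr : 3 ≤ r) (hℓr : r ≤ ℓ) (η ε : ℝ)
    (hη : η = 1 / (10 ^ 5 * (ℓ : ℝ) ^ 3 * (3 * (r : ℝ) - 4) ^ 3)) (hε : 0 ≤ ε)
    (n : ℕ) (G : SimpleGraph (Fin n)) (hfree : G.CliqueFree (ℓ + 1))
    (hedge : (turanEdges 2 n ℓ : ℝ) - ε * (n : ℝ) ^ 2 ≤ (G.edgeSet.ncard : ℝ))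
    (t : ℕ) (v : Fin t → Fin n) (hv : Function.Injective v)
    (hdeg : ∀ i : Fin t,
      ({w | G.Adj (v i) w ∧ ∀ j : Fin t, (j : ℕ) < (i : ℕ) → w ≠ v j}.ncard : ℝ) <
        (((ℓ : ℝ) - 1) / (ℓ : ℝ) - η) * ((n : ℝ) - (i : ℕ)))
    (P : Fin ℓ → Finset (Fin n))
    (hdisj : ∀ i j, i ≠ j → Disjoint (P i) (P j))
    (hPsub : ∀ i, ∀ x ∈ P i, ∀ j : Fin t, x ≠ v j)
    (hcover : ∀ x : Fin n, (∀ j : Fin t, x ≠ v j) → ∃ i, x ∈ P i)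
    (hpart : ∀ i, ∀ u ∈ P i, ∀ w ∈ P i, ¬ G.Adj u w) :
    ({p : Fin n × Fin n | p.1 < p.2 ∧
        (∃ i j, i ≠ j ∧ p.1 ∈ P i ∧ p.2 ∈ P j) ∧ ¬ G.Adj p.1 p.2}.ncard : ℝ) ≤
      10 ^ 6 * (ℓ : ℝ) ^ 3 * (3 * (r : ℝ) - 4) ^ 3 * ε * (n : ℝ) ^ 2 := by
  classical
  have hℓ3 : 3 ≤ ℓ := le_trans hr hℓr
  have hℓ0 : 0 < ℓ := by omega
  have htn : t ≤ n := by simpa using Fintype.card_le_of_injective v hv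
  have hℓR : (3 : ℝ) ≤ (ℓ : ℝ) := by exact_mod_cast hℓ3
  have hrR : (3 : ℝ) ≤ (r : ℝ) := by exact_mod_cast hr
  have hη0 : 0 ≤ η := by
    rw [hη]
    have : (0:ℝ) < 10 ^ 5 * (ℓ : ℝ) ^ 3 * (3 * (r : ℝ) - 4) ^ 3 := by
      apply mul_pos (mul_pos (by norm_num) (by positivity))
      have : (0:ℝ) < 3 * (r:ℝ) - 4 := by linarith
      positivity
    positivity
  set m := n - t with hm
  -- key finsets
  set crossF : Finset (Fin n × Fin n) :=
    univ.filter (fun p => p.1 < p.2 ∧ ∃ i j, i ≠ j ∧ p.1 ∈ P i ∧ p.2 ∈ P j) with hcrossF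
  set Ffin := crossF.filter (fun p => ¬ G.Adj p.1 p.2) with hFfin
  set Cfin := crossF.filter (fun p => G.Adj p.1 p.2) with hCfin
  set ltpG := univ.filter (fun p : Fin n × Fin n => p.1 < p.2 ∧ G.Adj p.1 p.2) with hltpG
  set Nfin : Fin t → Finset (Fin n) := fun i =>
    univ.filter (fun w => G.Adj (v i) w ∧ ∀ j : Fin t, (j:ℕ) < (i:ℕ) → w ≠ v j) with hNfin
  -- goal set is Ffin
  have hgoal : ({p : Fin n × Fin n | p.1 < p.2 ∧
        (∃ i j, i ≠ j ∧ p.1 ∈ P i ∧ p.2 ∈ P j) ∧ ¬ G.Adj p.1 p.2}.ncard) = #Ffin := by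
    rw [show {p : Fin n × Fin n | p.1 < p.2 ∧
        (∃ i j, i ≠ j ∧ p.1 ∈ P i ∧ p.2 ∈ P j) ∧ ¬ G.Adj p.1 p.2} = ↑Ffin by
      ext p
      simp only [hFfin, hcrossF, Finset.coe_filter, Set.mem_setOf_eq, mem_filter, mem_univ,
        true_and]
      tauto]
    exact Set.ncard_coe_finset _
  rw [hgoal]
  -- (1) split
  have hsplit1 : #Cfin + #Ffin = #crossF := Finset.card_filter_add_card_filter_not _
  -- (2) Cfin inside ltpG
  have hCsub : Cfin ⊆ ltpG := by
    intro p hp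
    simp only [hCfin, hcrossF, hltpG, mem_filter, mem_univ, true_and] at hp ⊢
    exact ⟨hp.1.1, hp.2⟩
  -- key: members of ltpG \ Cfin involve a removed vertex
  have hkeyJ : ∀ p ∈ ltpG \ Cfin, ∃ j : Fin t, v j = p.1 ∨ v j = p.2 := by
    intro p hp
    rw [Finset.mem_sdiff] at hp
    obtain ⟨hpG, hpC⟩ := hp
    simp only [hltpG, mem_filter, mem_univ, true_and] at hpG
    by_contra hcon
    push_neg at hcon
    obtain ⟨i1, hi1⟩ := hcover p.1 (fun j => fun h => (hcon j).1 h.symm)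
    obtain ⟨i2, hi2⟩ := hcover p.2 (fun j => fun h => (hcon j).2 h.symm)
    have hii : i1 ≠ i2 := by
      rintro rfl
      exact hpart i1 p.1 hi1 p.2 hi2 hpG.2
    apply hpC
    simp only [hCfin, hcrossF, mem_filter, mem_univ, true_and]
    exact ⟨⟨hpG.1, ⟨i1, i2, hii, hi1, hi2⟩⟩, hpG.2⟩
  -- (3) injection into sigma
  have hDp : #(ltpG \ Cfin) ≤ ∑ i : Fin t, #(Nfin i) := by
    rcases Nat.eq_zero_or_pos t with ht0 | ht0
    · have : ltpG \ Cfin = ∅ := by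
        apply Finset.eq_empty_of_forall_notMem
        intro p hp
        obtain ⟨j, _⟩ := hkeyJ p hp
        exact absurd j.2 (by omega)
      simp [this]
    · rw [← Finset.card_sigma]
      set Jset : Fin n × Fin n → Finset (Fin t) :=
        fun p => univ.filter (fun j => v j = p.1 ∨ v j = p.2) with hJset
      have hJne : ∀ p ∈ ltpG \ Cfin, (Jset p).Nonempty := by
        intro p hp
        obtain ⟨j, hj⟩ := hkeyJ p hp
        exact ⟨j, by simp [hJset, hj]⟩
      set ι : Fin n × Fin n → Fin t :=
        fun p => if h : (Jset p).Nonempty then (Jset p).min' h else ⟨0, ht0⟩ with hι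
      set oth : Fin n × Fin n → Fin n := fun p => if v (ι p) = p.1 then p.2 else p.1 with hoth
      have hmem : ∀ p ∈ ltpG \ Cfin,
          (v (ι p) = p.1 ∨ v (ι p) = p.2) ∧ ∀ j : Fin t, (v j = p.1 ∨ v j = p.2) → ι p ≤ j := by
        intro p hp
        have hne := hJne p hp
        constructor
        · have := Finset.min'_mem (Jset p) hne
          simp only [hJset, mem_filter, mem_univ, true_and] at this
          simpa [hι, dif_pos hne] using this
        · intro j hj
          have : j ∈ Jset p := by simp [hJset, hj]
          simpa [hι, dif_pos hne] using Finset.min'_le (Jset p) j this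
      have hsplit2 : ∀ p ∈ ltpG \ Cfin,
          (v (ι p) = p.1 ∧ oth p = p.2) ∨ (v (ι p) = p.2 ∧ oth p = p.1) := by
        intro p hp
        have hlt : p.1 < p.2 := by
          have := (Finset.mem_sdiff.1 hp).1
          simp only [hltpG, mem_filter, mem_univ, true_and] at this
          exact this.1
        rcases (hmem p hp).1 with h | h
        · exact Or.inl ⟨h, by simp [hoth, if_pos h]⟩
        · refine Or.inr ⟨h, ?_⟩
          have hne : v (ι p) ≠ p.1 := by rw [h]; exact (ne_of_lt hlt).symm
          simp [hoth, if_neg hne]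
      apply Finset.card_le_card_of_injOn (fun p => ⟨ι p, oth p⟩)
      · intro p hp
        have hlt2 : p.1 < p.2 ∧ G.Adj p.1 p.2 := by
          have := (Finset.mem_sdiff.1 hp).1
          simpa only [hltpG, mem_filter, mem_univ, true_and] using this
        rw [Finset.mem_coe, Finset.mem_sigma]
        refine ⟨Finset.mem_univ _, ?_⟩
        simp only [hNfin, mem_filter, mem_univ, true_and]
        constructor
        · rcases hsplit2 p hp with ⟨h1, h2⟩ | ⟨h1, h2⟩
          · rw [h1, h2]; exact hlt2.2
          · rw [h1, h2]; exact hlt2.2.symm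
        · intro j hj heq
          have hjJ : v j = p.1 ∨ v j = p.2 := by
            rcases hsplit2 p hp with ⟨h1, h2⟩ | ⟨h1, h2⟩
            · right; rw [← h2, heq]
            · left; rw [← h2, heq]
          have := (hmem p hp).2 j hjJ
          have : ((ι p : Fin t) : ℕ) ≤ (j : ℕ) := this
          omega
      · intro p hp q hq heq
        rw [Finset.mem_coe] at hp hq
        have hfst : ι p = ι q := congrArg Sigma.fst heq
        have hsnd : oth p = oth q := by
          have := (Sigma.mk.inj_iff.1 heq).2
          exact eq_of_heq this
        have hplt : (p.1 : ℕ) < (p.2 : ℕ) := by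
          have := (Finset.mem_sdiff.1 hp).1
          simp only [hltpG, mem_filter, mem_univ, true_and] at this
          exact Fin.lt_def.1 this.1
        have hqlt : (q.1 : ℕ) < (q.2 : ℕ) := by
          have := (Finset.mem_sdiff.1 hq).1
          simp only [hltpG, mem_filter, mem_univ, true_and] at this
          exact Fin.lt_def.1 this.1
        have hvv : (v (ι p) : Fin n) = v (ι q) := by rw [hfst]
        rcases hsplit2 p hp with ⟨h1, h2⟩ | ⟨h1, h2⟩ <;>
          rcases hsplit2 q hq with ⟨h3, h4⟩ | ⟨h3, h4⟩
        · have e1 : p.1 = q.1 := by rw [← h1, ← h3, hvv]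
          have e2 : p.2 = q.2 := by rw [← h2, ← h4, hsnd]
          exact Prod.ext e1 e2
        · exfalso
          have e1 : p.1 = q.2 := by rw [← h1, ← h3, hvv]
          have e2 : p.2 = q.1 := by rw [← h2, ← h4, hsnd]
          have := congrArg (fun x : Fin n => (x : ℕ)) e1
          have := congrArg (fun x : Fin n => (x : ℕ)) e2
          simp only at *
          omega
        · exfalso
          have e1 : p.2 = q.1 := by rw [← h1, ← h3, hvv]
          have e2 : p.1 = q.2 := by rw [← h2, ← h4, hsnd]
          have := congrArg (fun x : Fin n => (x : ℕ)) e1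
          have := congrArg (fun x : Fin n => (x : ℕ)) e2
          simp only at *
          omega
        · have e1 : p.2 = q.2 := by rw [← h1, ← h3, hvv]
          have e2 : p.1 = q.1 := by rw [← h2, ← h4, hsnd]
          exact Prod.ext e2 e1
  -- (4) degree bound per i
  have hd : ∀ i : Fin t, #(Nfin i) ≤ (n - 1 - (i:ℕ)) - (n - 1 - (i:ℕ)) / ℓ := by
    intro i
    set K := n - 1 - (i:ℕ) with hK
    have hit : (i:ℕ) < t := i.2
    have hKn : n - (i:ℕ) = K + 1 := by omega
    have hcard : ({w | G.Adj (v i) w ∧ ∀ j : Fin t, (j : ℕ) < (i : ℕ) → w ≠ v j}.ncard)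
        = #(Nfin i) := by
      rw [show {w | G.Adj (v i) w ∧ ∀ j : Fin t, (j : ℕ) < (i : ℕ) → w ≠ v j}
          = ↑(Nfin i) by
        ext w
        simp only [hNfin, Finset.coe_filter, Set.mem_setOf_eq, mem_filter, mem_univ, true_and]]
      exact Set.ncard_coe_finset _
    have hdi := hdeg i
    rw [hcard] at hdi
    have hℓne : (ℓ:ℝ) ≠ 0 := by positivity
    have hnK : (n:ℝ) - (i:ℕ) = (K:ℝ) + 1 := by
      have h' : ((n - (i:ℕ) : ℕ) : ℝ) = ((K + 1 : ℕ) : ℝ) := by rw [hKn]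
      rw [Nat.cast_sub (by omega : (i:ℕ) ≤ n)] at h'
      push_cast at h'
      linarith
    have hstep : (#(Nfin i) : ℝ) < ((1:ℝ) - 1/(ℓ:ℝ)) * ((K:ℝ) + 1) := by
      have h1 : ((ℓ:ℝ) - 1) / (ℓ:ℝ) = 1 - 1/(ℓ:ℝ) := by field_simp
      have h2 : (0:ℝ) ≤ (K:ℝ) + 1 := by positivity
      calc (#(Nfin i) : ℝ) < (((ℓ : ℝ) - 1) / (ℓ : ℝ) - η) * ((n : ℝ) - (i : ℕ)) := hdi
        _ = (((ℓ : ℝ) - 1) / (ℓ : ℝ) - η) * ((K:ℝ) + 1) := by rw [hnK]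
        _ ≤ (((ℓ : ℝ) - 1) / (ℓ : ℝ)) * ((K:ℝ) + 1) := by nlinarith
        _ = ((1:ℝ) - 1/(ℓ:ℝ)) * ((K:ℝ) + 1) := by rw [h1]
    have hdiv : ((K / ℓ : ℕ) : ℝ) ≤ (K:ℝ) / (ℓ:ℝ) := Nat.cast_div_le
    have hℓpos : (0:ℝ) < (ℓ:ℝ) := by positivity
    have hfin : (#(Nfin i) : ℝ) + ((K / ℓ : ℕ) : ℝ) < (K:ℝ) + 1 := by
      have expand : ((1:ℝ) - 1/(ℓ:ℝ)) * ((K:ℝ) + 1) = (K:ℝ) + 1 - ((K:ℝ)+1)/(ℓ:ℝ) := by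
        field_simp
      have : (K:ℝ)/(ℓ:ℝ) = ((K:ℝ)+1)/(ℓ:ℝ) - 1/(ℓ:ℝ) := by field_simp; ring
      have hpos : (0:ℝ) < 1/(ℓ:ℝ) := by positivity
      linarith
    have hnat : #(Nfin i) + K / ℓ < K + 1 := by exact_mod_cast hfin
    omega
  -- (5) sum over i
  have hsum : ∑ i : Fin t, #(Nfin i) ≤ ∑ j ∈ Finset.Ico m n, (j - j / ℓ) := by
    calc ∑ i : Fin t, #(Nfin i)
        ≤ ∑ i : Fin t, ((n - 1 - (i:ℕ)) - (n - 1 - (i:ℕ)) / ℓ) := Finset.sum_le_sum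
          (fun i _ => hd i)
      _ = ∑ j ∈ Finset.Ico m n, (j - j / ℓ) := by
          rw [Fin.sum_univ_eq_sum_range (fun k => (n - 1 - k) - (n - 1 - k) / ℓ) t]
          apply Finset.sum_nbij' (i := fun k => n - 1 - k) (j := fun j => n - 1 - j)
          · intro a ha
            simp only [Finset.mem_range] at ha
            simp only [Finset.mem_Ico, hm]
            omega
          · intro a ha
            simp only [Finset.mem_Ico, hm] at ha
            simp only [Finset.mem_range]
            omega
          · intro a ha
            simp only [Finset.mem_range] at ha
            omega
          · intro a ha
            simp only [Finset.mem_Ico, hm] at ha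
            omega
          · intro a ha
            rfl
  -- (6) remainder multipartite graph on kept vertices
  let α := {x : Fin n // ∀ j : Fin t, x ≠ v j}
  have hcardα : Fintype.card α = m := by
    have h1 : Fintype.card {x : Fin n // ∃ j, x = v j} = t := by
      have e1 : {x : Fin n // ∃ j, x = v j} ≃ Set.range v :=
        Equiv.subtypeEquivRight (by intro x; simp [Set.mem_range, eq_comm])
      rw [Fintype.card_congr e1, Fintype.card_congr (Equiv.ofInjective v hv).symm,
        Fintype.card_fin]
    have e2 : α ≃ {x : Fin n // ¬ ∃ j, x = v j} :=
      Equiv.subtypeEquivRight (by intro x; simp [not_exists])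
    rw [Fintype.card_congr e2, Fintype.card_subtype_compl, h1, Fintype.card_fin]
  let M : SimpleGraph α := {
    Adj := fun a b => ∃ i j, i ≠ j ∧ (a : Fin n) ∈ P i ∧ (b : Fin n) ∈ P j
    symm := ⟨by rintro a b ⟨i, j, hij, h1, h2⟩; exact ⟨j, i, hij.symm, h2, h1⟩⟩
    loopless := ⟨by
      rintro a ⟨i, j, hij, h1, h2⟩
      exact (Finset.disjoint_left.1 (hdisj i j hij)) h1 h2⟩ }
  haveI : DecidableRel M.Adj := Classical.decRel _
  have hMfree : M.CliqueFree (ℓ + 1) := by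
    have hcol : M.Colorable ℓ := by
      refine ⟨SimpleGraph.Coloring.mk (fun a => Classical.choose (hcover a.1 a.2)) ?_⟩
      rintro a b ⟨i, j, hij, h1, h2⟩ hEq
      have ha := Classical.choose_spec (hcover a.1 a.2)
      have hb := Classical.choose_spec (hcover b.1 b.2)
      have hai : Classical.choose (hcover a.1 a.2) = i := by
        by_contra hne
        exact (Finset.disjoint_left.1 (hdisj _ _ hne)) ha h1
      have hbj : Classical.choose (hcover b.1 b.2) = j := by
        by_contra hne
        exact (Finset.disjoint_left.1 (hdisj _ _ hne)) hb h2
      apply hij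
      rw [← hai, ← hbj]
      simpa using hEq
    exact hcol.cliqueFree (Nat.lt_succ_self ℓ)
  have hXM : #(univ.filter fun p : α × α => p.1 < p.2 ∧ M.Adj p.1 p.2) = #crossF := by
    apply Finset.card_bij (fun q _ => ((q.1.1 : Fin n), (q.2.1 : Fin n)))
    · intro q hq
      simp only [mem_filter, mem_univ, true_and] at hq
      simp only [hcrossF, mem_filter, mem_univ, true_and]
      exact ⟨hq.1, hq.2⟩
    · intro q hq q' hq' h
      have h1 : q.1.1 = q'.1.1 := congrArg Prod.fst h
      have h2 : q.2.1 = q'.2.1 := congrArg Prod.snd h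
      exact Prod.ext (Subtype.ext h1) (Subtype.ext h2)
    · intro p hp
      simp only [hcrossF, mem_filter, mem_univ, true_and] at hp
      obtain ⟨hlt, i, j, hij, h1, h2⟩ := hp
      refine ⟨((⟨p.1, fun jj => hPsub i p.1 h1 jj⟩ : α), (⟨p.2, fun jj => hPsub j p.2 h2 jj⟩ : α)),
        ?_, ?_⟩
      · simp only [mem_filter, mem_univ, true_and]
        exact ⟨hlt, ⟨i, j, hij, h1, h2⟩⟩
      · rfl
  have hXbound : #crossF ≤ #(SimpleGraph.turanGraph m ℓ).edgeFinset := by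
    rw [← hXM, card_ltp]
    have := turan_bound M hℓ0 hMfree
    rwa [hcardα] at this
  -- (7) edge counts of G
  have hE1 : G.edgeSet.ncard = #ltpG := by
    rw [← SimpleGraph.coe_edgeFinset, Set.ncard_coe_finset, hltpG]
    exact (card_ltp G).symm
  have hsd : #(ltpG \ Cfin) + #Cfin = #ltpG := Finset.card_sdiff_add_card_eq_card hCsub
  have hTG := TG_sum ℓ hℓ0 m n (by omega)
  have hT2 := turanEdges_eq n ℓ hℓ0
  -- cast everything to ℝ and conclude
  have c1 : (#Cfin : ℝ) + #Ffin = #crossF := by exact_mod_cast hsplit1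
  have c2 : (#ltpG : ℝ) ≤ #Cfin + ((∑ i : Fin t, #(Nfin i) : ℕ) : ℝ) := by
    have : #ltpG ≤ #Cfin + ∑ i : Fin t, #(Nfin i) := by omega
    exact_mod_cast this
  have c3 : (#crossF : ℝ) ≤ (#(SimpleGraph.turanGraph m ℓ).edgeFinset : ℝ) := by
    exact_mod_cast hXbound
  have c4 : (#(SimpleGraph.turanGraph n ℓ).edgeFinset : ℝ)
      = #(SimpleGraph.turanGraph m ℓ).edgeFinset
        + ((∑ j ∈ Finset.Ico m n, (j - j / ℓ) : ℕ) : ℝ) := by exact_mod_cast hTG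
  have c5 : ((∑ i : Fin t, #(Nfin i) : ℕ) : ℝ) ≤ ((∑ j ∈ Finset.Ico m n, (j - j / ℓ) : ℕ) : ℝ) :=
    by exact_mod_cast hsum
  have c6 : (#(SimpleGraph.turanGraph n ℓ).edgeFinset : ℝ) - ε * (n:ℝ)^2 ≤ (#ltpG : ℝ) := by
    rw [hT2] at hedge
    rw [hE1] at hedge
    exact hedge
  have hFf : (#Ffin : ℝ) ≤ ε * (n:ℝ)^2 := by linarith
  have hcoef : (1 : ℝ) ≤ 10 ^ 6 * (ℓ : ℝ) ^ 3 * (3 * (r : ℝ) - 4) ^ 3 := by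
    have h5 : (5:ℝ) ≤ 3 * (r:ℝ) - 4 := by linarith
    have h27 : (27:ℝ) ≤ (ℓ:ℝ)^3 := by
      calc (27:ℝ) = 3^3 := by norm_num
        _ ≤ (ℓ:ℝ)^3 := pow_le_pow_left₀ (by norm_num) hℓR 3
    have h125 : (125:ℝ) ≤ (3*(r:ℝ)-4)^3 := by
      calc (125:ℝ) = 5^3 := by norm_num
        _ ≤ (3*(r:ℝ)-4)^3 := pow_le_pow_left₀ (by norm_num) h5 3
    calc (1:ℝ) ≤ 10^6 * 27 * 125 := by norm_num
      _ ≤ 10 ^ 6 * (ℓ : ℝ) ^ 3 * (3 * (r : ℝ) - 4) ^ 3 := by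
          apply mul_le_mul (mul_le_mul le_rfl h27 (by norm_num) (by norm_num)) h125
            (by norm_num) (by positivity)
  have hεn : (0:ℝ) ≤ ε * (n:ℝ)^2 := by positivity
  calc (#Ffin : ℝ) ≤ ε * (n:ℝ)^2 := hFf
    _ = 1 * (ε * (n:ℝ)^2) := by ring
    _ ≤ (10 ^ 6 * (ℓ : ℝ) ^ 3 * (3 * (r : ℝ) - 4) ^ 3) * (ε * (n:ℝ)^2) :=
        mul_le_mul_of_nonneg_right hcoef hεn
    _ = 10 ^ 6 * (ℓ : ℝ) ^ 3 * (3 * (r : ℝ) - 4) ^ 3 * ε * (n : ℝ) ^ 2 := by ring
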